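/- Let C be the category whose objects are the F∞-modules E_0 and E(n) for n ≥ 4, and whose morphisms are splittable injections: injective functions preserving ∔, − and 0 that admit a left inverse also preserving ∔, − and 0. Let k be any nontrivial ring. Then the subfunctor M of the principal projective P_{E_0} : C ⥤ ModuleCat k defined by M(Z) := the k-span of {e_{g ∘ u} : n ≥ 4, u : E_0 ⟶ E(n) in C, g : E(n) ⟶ Z in C} is not finitely generated. In particular, C is not locally Noetherian. -/

import Mathlib

open CategoryTheory
open scoped Classical

def Sset (n : ℕ) : Set (ℕ × ℕ) :=
  {p | 1 ≤ p.1 ∧ p.1 ≤ n ∧ 1 ≤ p.2 ∧ p.2 ≤ n ∧ p.1 ≤ p.2 + 1 ∧ p.2 ≤ p.1 + 2}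

/-- `S(n)` as a sublattice of `ℕ × ℕ` (componentwise max and min). -/
def SL (n : ℕ) : Sublattice (ℕ × ℕ) where
  carrier := Sset n
  supClosed' := by
    rintro ⟨i, k⟩ h1 ⟨l, m⟩ h2
    simp only [Sset, Set.mem_setOf_eq, Prod.sup_def] at h1 h2 ⊢
    omega
  infClosed' := by
    rintro ⟨i, k⟩ h1 ⟨l, m⟩ h2
    simp only [Sset, Set.mem_setOf_eq, Prod.inf_def] at h1 h2 ⊢
    omega

/-- `D(n) = WithBot S(n)`: `S(n)` with a bottom element `O` adjoined. -/
abbrev Dn (n : ℕ) : Type := WithBot ↥(SL n)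

/-- The element `a_{ik}` of `D(n)` (junk value `⊥` if `(i,k) ∉ S(n)`). -/
noncomputable def aElt (n i k : ℕ) : Dn n :=
  if h : (i, k) ∈ SL n then (↑(⟨(i, k), h⟩ : ↥(SL n)) : Dn n) else ⊥
/-- The 8-element sublattice of `ℕ × ℕ` underlying `D_0`. -/
def SL0 : Sublattice (ℕ × ℕ) where
  carrier := {(1,1),(1,2),(2,1),(2,2),(3,3),(3,4),(4,3),(4,4)}
  supClosed' := by
    intro a ha b hb
    simp only [Set.mem_insert_iff, Set.mem_singleton_iff] at *
    rcases ha with rfl|rfl|rfl|rfl|rfl|rfl|rfl|rfl <;>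
      rcases hb with rfl|rfl|rfl|rfl|rfl|rfl|rfl|rfl <;> decide
  infClosed' := by
    intro a ha b hb
    simp only [Set.mem_insert_iff, Set.mem_singleton_iff] at *
    rcases ha with rfl|rfl|rfl|rfl|rfl|rfl|rfl|rfl <;>
      rcases hb with rfl|rfl|rfl|rfl|rfl|rfl|rfl|rfl <;> decide

/-- The 9-element B-module `D_0` (with bottom element `O` adjoined). -/
abbrev D0 : Type := WithBot ↥SL0

/-- The element `A_{ik}` of `D_0` (junk value `⊥` if `(i,k)` is not in the lattice). -/
noncomputable def A0 (i k : ℕ) : D0 :=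
  if h : (i, k) ∈ SL0 then (↑(⟨(i, k), h⟩ : ↥SL0) : D0) else ⊥
/-- F∞-module structure on `Option (Bool × α)` for a meet-semilattice `α`. -/
abbrev Emod (α : Type) : Type := Option (Bool × α)

/-- Negation: `−none = none`, `−some (ε, p) = some (¬ε, p)`. -/
def Emod.neg {α : Type} : Emod α → Emod α :=
  Option.map (fun p => (!p.1, p.2))

/-- Addition: `x ∔ none = none ∔ x = none`, and
`some (ε, p) ∔ some (ε', q) = some (ε, p ⊓ q)` if `ε = ε'`, `none` otherwise. -/
noncomputable def Emod.add {α : Type} [SemilatticeInf α] : Emod α → Emod α → Emod α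
  | some (ε, p), some (ε', q) => if ε = ε' then some (ε, p ⊓ q) else none
  | _, _ => none

/-- Nonzero vectors of the free F∞-module of rank `m`. -/
abbrev FVec (m : ℕ) : Type := {σ : Fin m → Option Bool // σ ≠ fun _ => none}

/-- The free F∞-module of rank `m`, with zero `none`. -/
abbrev Fm (m : ℕ) : Type := Option (FVec m)

/-- Negation on the free F∞-module: Boolean negation on each defined value. -/
def Fm.neg {m : ℕ} : Fm m → Fm m :=
  Option.map (fun σ => ⟨fun i => (σ.val i).map (fun b => !b), by
    intro hcontra
    apply σ.prop
    funext i
    have h := congrFun hcontra i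
    simpa using h⟩)

/-- Addition on the free F∞-module: `none` absorbs; two nonzero vectors add to `none`
if they clash in some coordinate, and otherwise to their pointwise merge. -/
noncomputable def Fm.add {m : ℕ} : Fm m → Fm m → Fm m
  | some σ, some τ =>
      if ∃ (i : Fin m) (b : Bool), σ.val i = some b ∧ τ.val i = some (!b) then none
      else some ⟨fun i => (σ.val i).or (τ.val i), by
        intro hcontra
        apply σ.prop
        funext i
        have h := congrFun hcontra i
        cases hv : σ.val i with
        | none => rfl
        | some b => rw [hv] at h; simp [Option.or] at h⟩
  | _, _ => none

/-- A type with F∞-module operations `0`, `∔`, `−`. -/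
class FStr (α : Type) where
  z : α
  add : α → α → α
  neg : α → α

noncomputable instance {α : Type} [SemilatticeInf α] : FStr (Emod α) :=
  ⟨none, Emod.add, Emod.neg⟩

noncomputable instance {m : ℕ} : FStr (Fm m) :=
  ⟨none, Fm.add, Fm.neg⟩

/-- A map preserving `0`, `∔` and `−`. -/
def IsFHom {α β : Type} [FStr α] [FStr β] (f : α → β) : Prop :=
  f FStr.z = FStr.z ∧ (∀ x y, f (FStr.add x y) = FStr.add (f x) (f y)) ∧
    ∀ x, f (FStr.neg x) = FStr.neg (f x)
/-- A functor `F : C ⥤ ModuleCat k` is finitely generated if finitely many elements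
`α_j ∈ F(Z_j)` exist such that every `F(W)` is the `k`-span of their images. -/
def FunctorFG {C : Type*} [Category C] {k : Type} [Ring k]
    (F : C ⥤ ModuleCat.{0} k) : Prop :=
  ∃ (ℓ : ℕ) (Z : Fin ℓ → C) (α : ∀ j, F.obj (Z j)),
    ∀ W : C, (⊤ : Submodule k (F.obj W)) =
      Submodule.span k {v | ∃ (j : Fin ℓ) (h : Z j ⟶ W), v = F.map h (α j)}

/-- A subfunctor of `F`: a choice of submodules closed under all the maps `F(h)`. -/
def IsSubfunctor {C : Type*} [Category C] {k : Type} [Ring k]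
    (F : C ⥤ ModuleCat.{0} k) (M : ∀ Z : C, Submodule k (F.obj Z)) : Prop :=
  ∀ ⦃Z W : C⦄ (h : Z ⟶ W) (x : F.obj Z), x ∈ M Z → F.map h x ∈ M W

/-- A subfunctor `M` of `F` is finitely generated if finitely many elements
`α_j ∈ M(Z_j)` exist such that every `M(W)` is the `k`-span of their images. -/
def SubfunctorFG {C : Type*} [Category C] {k : Type} [Ring k]
    (F : C ⥤ ModuleCat.{0} k) (M : ∀ Z : C, Submodule k (F.obj Z)) : Prop :=
  ∃ (ℓ : ℕ) (Z : Fin ℓ → C) (α : ∀ j, F.obj (Z j)),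
    (∀ j, α j ∈ M (Z j)) ∧
    ∀ W : C, M W = Submodule.span k {v | ∃ (j : Fin ℓ) (h : Z j ⟶ W), v = F.map h (α j)}

/-- A category is locally Noetherian if for every left-Noetherian ring `k`, every
subfunctor of every finitely generated functor `C ⥤ ModuleCat k` is finitely
generated. -/
def LocallyNoetherian (C : Type*) [Category C] : Prop :=
  ∀ (k : Type) [Ring k] [IsNoetherianRing k] (F : C ⥤ ModuleCat.{0} k),
    FunctorFG F → ∀ M : ∀ Z : C, Submodule k (F.obj Z), IsSubfunctor F M → SubfunctorFG F M
/-- Objects: the F∞-module `E_0` and the F∞-modules `E(n)` for `n ≥ 4`. -/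
inductive EObj : Type
  | e0 : EObj
  | en : (n : ℕ) → 4 ≤ n → EObj

/-- The underlying meet-semilattice of an object. -/
def EObj.base : EObj → Type
  | .e0 => ↥SL0
  | .en n _ => ↥(SL n)

noncomputable instance (X : EObj) : SemilatticeInf X.base := by
  cases X with
  | e0 => exact inferInstanceAs (SemilatticeInf ↥SL0)
  | en n _ => exact inferInstanceAs (SemilatticeInf ↥(SL n))

/-- The underlying F∞-module of an object. -/
abbrev EObj.carrier (X : EObj) : Type := Emod X.base

/-- The category of the F∞-modules `E_0` and `E(n)` (`n ≥ 4`) whose morphisms are the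
splittable injections: injective maps preserving `∔`, `−` and `0` admitting a left
inverse that also preserves `∔`, `−` and `0`. -/
noncomputable instance : Category.{0} EObj where
  Hom X Y := {f : X.carrier → Y.carrier //
    IsFHom f ∧ Function.Injective f ∧
      ∃ t : Y.carrier → X.carrier, IsFHom t ∧ ∀ x, t (f x) = x}
  id X := ⟨id, ⟨rfl, fun _ _ => rfl, fun _ => rfl⟩, fun _ _ h => h,
    ⟨id, ⟨rfl, fun _ _ => rfl, fun _ => rfl⟩, fun _ => rfl⟩⟩
  comp f g := ⟨g.1 ∘ f.1,
    ⟨by simp [Function.comp, f.2.1.1, g.2.1.1],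
     fun x y => by simp [Function.comp, f.2.1.2.1, g.2.1.2.1],
     fun x => by simp [Function.comp, f.2.1.2.2, g.2.1.2.2]⟩,
    fun _ _ h => f.2.2.1 (g.2.2.1 h),
    ⟨f.2.2.2.choose ∘ g.2.2.2.choose,
      ⟨by simp [Function.comp, f.2.2.2.choose_spec.1.1, g.2.2.2.choose_spec.1.1],
       fun x y => by
        simp [Function.comp, f.2.2.2.choose_spec.1.2.1, g.2.2.2.choose_spec.1.2.1],
       fun x => by
        simp [Function.comp, f.2.2.2.choose_spec.1.2.2, g.2.2.2.choose_spec.1.2.2]⟩,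
      fun x => by
        simp [Function.comp, f.2.2.2.choose_spec.2, g.2.2.2.choose_spec.2]⟩⟩
  id_comp f := rfl
  comp_id f := rfl
  assoc f g h := rfl

/-- The generating set of the subfunctor `M` of the principal projective `P_{E_0}`:
the basis vectors `e_{g ∘ u}` for `u : E_0 ⟶ E(n)`, `g : E(n) ⟶ Z`, `n ≥ 4`. -/
def MsetE (k : Type) [Ring k] (Z : EObj) : Set ((EObj.e0 ⟶ Z) →₀ k) :=
  {v | ∃ (n : ℕ) (h4 : 4 ≤ n) (u : EObj.e0 ⟶ EObj.en n h4) (g : EObj.en n h4 ⟶ Z),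
    v = Finsupp.single (u ≫ g) (1 : k)}

-- ===================== auxiliary development =====================
section AuxLattice

lemma mem_SL_iff {n : ℕ} {p : ℕ × ℕ} :
    p ∈ SL n ↔ 1 ≤ p.1 ∧ p.1 ≤ n ∧ 1 ≤ p.2 ∧ p.2 ≤ n ∧ p.1 ≤ p.2 + 1 ∧ p.2 ≤ p.1 + 2 :=
  Iff.rfl

lemma mem_SL0_iff {p : ℕ × ℕ} :
    p ∈ SL0 ↔ p = (1,1) ∨ p = (1,2) ∨ p = (2,1) ∨ p = (2,2) ∨ p = (3,3) ∨ p = (3,4) ∨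
      p = (4,3) ∨ p = (4,4) := by
  show p ∈ ({(1,1),(1,2),(2,1),(2,2),(3,3),(3,4),(4,3),(4,4)} : Set (ℕ × ℕ)) ↔ _
  simp [Set.mem_insert_iff]

lemma SLval_inf {L : Sublattice (ℕ × ℕ)} (a b : ↥L) :
    (a ⊓ b).val = (min a.val.1 b.val.1, min a.val.2 b.val.2) := rfl

lemma SL_le_iff {L : Sublattice (ℕ × ℕ)} (a b : ↥L) :
    a ≤ b ↔ a.val.1 ≤ b.val.1 ∧ a.val.2 ≤ b.val.2 := by
  rw [← Subtype.coe_le_coe, Prod.le_def]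

end AuxLattice
section AuxEmod

/-- Lift a meet-hom to the `Emod` level. -/
def latHom {α β : Type} (θ : α → β) : Emod α → Emod β :=
  Option.map (fun x => (x.1, θ x.2))

lemma latHom_some {α β : Type} (θ : α → β) (ε : Bool) (p : α) :
    latHom θ (some (ε, p)) = some (ε, θ p) := rfl

lemma latHom_isFHom {α β : Type} [SemilatticeInf α] [SemilatticeInf β] (θ : α → β)
    (hθ : ∀ x y, θ (x ⊓ y) = θ x ⊓ θ y) : IsFHom (latHom θ) := by
  refine ⟨rfl, ?_, ?_⟩
  · rintro (_ | ⟨ε, p⟩) (_ | ⟨ε', q⟩)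
    · rfl
    · rfl
    · rfl
    · show latHom θ (Emod.add _ _) = Emod.add _ _
      by_cases h : ε = ε'
      · subst h; simp [Emod.add, latHom, hθ]
      · simp [Emod.add, latHom, h]
  · rintro (_ | ⟨ε, p⟩) <;> rfl

lemma latHom_inj {α β : Type} {θ : α → β} (hθ : Function.Injective θ) :
    Function.Injective (latHom θ) := by
  rintro (_ | ⟨ε, p⟩) (_ | ⟨ε', q⟩) h <;> simp [latHom] at h ⊢
  exact ⟨h.1, hθ h.2⟩

/-- Build a morphism of `EObj` from a split meet-embedding. -/
def mkHom (X Y : EObj) (θ : X.base → Y.base) (ψ : Y.base → X.base)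
    (hθ : ∀ x y, θ (x ⊓ y) = θ x ⊓ θ y) (hθi : Function.Injective θ)
    (hψ : ∀ x y, ψ (x ⊓ y) = ψ x ⊓ ψ y) (hr : ∀ x, ψ (θ x) = x) : X ⟶ Y :=
  ⟨latHom θ, latHom_isFHom θ hθ, latHom_inj hθi,
    ⟨latHom ψ, latHom_isFHom ψ hψ, by rintro (_ | ⟨ε, p⟩) <;> simp [latHom, hr]⟩⟩

/-- Extract the underlying meet-embedding from a morphism of `EObj`. -/
lemma extract {X Y : EObj} (G : X ⟶ Y) :
    ∃ φ : X.base → Y.base, Function.Injective φ ∧ (∀ p q, φ (p ⊓ q) = φ p ⊓ φ q) ∧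
      (∀ (x : X.carrier) (ε : Bool) (q : Y.base), G.1 x = some (ε, q) → ∃ p, φ p = q) := by
  have hnone : G.1 none = none := G.2.1.1
  have hsome : ∀ p : X.base, ∃ c r, G.1 (some (true, p)) = some (c, r) := by
    intro p
    cases hx : G.1 (some (true, p)) with
    | none =>
      exfalso
      have := G.2.2.1 (hx.trans hnone.symm)
      simp at this
    | some y => exact ⟨y.1, y.2, by simp [hx]⟩
  choose c r hcr using hsome
  have hadd : ∀ p q : X.base,
      some (c (p ⊓ q), r (p ⊓ q)) = Emod.add (some (c p, r p)) (some (c q, r q)) := by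
    intro p q
    have h := G.2.1.2.1 (some (true, p)) (some (true, q))
    have harg : (FStr.add (some (true, p)) (some (true, q)) : X.carrier) = some (true, p ⊓ q) := by
      show Emod.add _ _ = _
      simp [Emod.add]
    rw [harg, hcr, hcr, hcr] at h
    exact h
  have hsign : ∀ p q : X.base, c p = c q := by
    intro p q
    by_contra hc
    have h := hadd p q
    simp [Emod.add, hc] at h
  have hmeet : ∀ p q : X.base, r (p ⊓ q) = r p ⊓ r q := by
    intro p q
    have h := hadd p q
    rw [show Emod.add (some (c p, r p)) (some (c q, r q)) = some (c p, r p ⊓ r q) by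
      simp [Emod.add, hsign p q]] at h
    exact (Prod.mk.injEq _ _ _ _ ▸ Option.some.inj h).2
  refine ⟨r, ?_, hmeet, ?_⟩
  · intro p q hpq
    have : G.1 (some (true, p)) = G.1 (some (true, q)) := by
      rw [hcr, hcr, hsign p q, hpq]
    have := G.2.2.1 this
    simpa using this
  · rintro (_ | ⟨ε, p⟩) ε' q hq
    · rw [hnone] at hq; exact absurd hq (by simp)
    · cases ε with
      | true => exact ⟨p, by rw [hcr] at hq; exact ((Prod.mk.injEq _ _ _ _ ▸ Option.some.inj hq).2)⟩
      | false =>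
        have hnegL : (some (false, p) : X.carrier) = FStr.neg (some (true, p)) := rfl
        have h := G.2.1.2.2 (some (true, p))
        rw [← hnegL] at h
        rw [hcr] at h
        have : G.1 (some (false, p)) = some (!c p, r p) := h
        rw [this] at hq
        exact ⟨p, ((Prod.mk.injEq _ _ _ _ ▸ Option.some.inj hq).2)⟩

lemma meet_reflect {α β : Type} [SemilatticeInf α] [SemilatticeInf β] {φ : α → β}
    (hinj : Function.Injective φ) (hmeet : ∀ p q, φ (p ⊓ q) = φ p ⊓ φ q) {x y : α}
    (h : φ x ≤ φ y) : x ≤ y := by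
  have h1 : φ (x ⊓ y) = φ x := by rw [hmeet]; exact inf_eq_left.2 h
  exact inf_eq_left.mp (hinj h1)

lemma meet_mono {α β : Type} [SemilatticeInf α] [SemilatticeInf β] {φ : α → β}
    (hmeet : ∀ p q, φ (p ⊓ q) = φ p ⊓ φ q) {x y : α} (h : x ≤ y) : φ x ≤ φ y := by
  have : φ x = φ x ⊓ φ y := by rw [← hmeet, inf_eq_left.2 h]
  rw [this]; exact inf_le_right

end AuxEmod
section AuxComb

/-- Incomparable pairs in a staircase are close together. -/
lemma incomp_close {n : ℕ} {a b : ℕ × ℕ} (ha : a ∈ Sset n) (hb : b ∈ Sset n)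
    (h1 : ¬(a.1 ≤ b.1 ∧ a.2 ≤ b.2)) (h2 : ¬(b.1 ≤ a.1 ∧ b.2 ≤ a.2)) :
    a.1 ≤ min a.1 b.1 + 2 ∧ a.2 ≤ min a.2 b.2 + 2 := by
  obtain ⟨a1, a2⟩ := a; obtain ⟨b1, b2⟩ := b
  simp only [Sset, Set.mem_setOf_eq] at ha hb
  omega

/-- Main combinatorial rigidity bound: an injective meet-hom `S(m) → S(N)` whose image
contains `(1,1)`, `(N-1,N)` and `(N,N-1)` forces `N ≤ 4m`. -/
lemma keybound {m N : ℕ} (hm : 4 ≤ m) (hN4 : 4 ≤ N) (φ : ↥(SL m) → ↥(SL N))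
    (hinj : Function.Injective φ) (hmeet : ∀ p q, φ (p ⊓ q) = φ p ⊓ φ q)
    (h1 : ∃ p, (φ p).val = (1, 1))
    (h2 : ∃ p, (φ p).val = (N - 1, N)) (h3 : ∃ p, (φ p).val = (N, N - 1)) :
    N ≤ 4 * m := by
  classical
  -- sum of coordinates of the image
  set sφ : ↥(SL m) → ℕ := fun x => (φ x).val.1 + (φ x).val.2 with hsφ
  -- membership of image values
  have himg : ∀ x : ↥(SL m), (φ x).val ∈ Sset N := fun x => (φ x).2
  have hself : ∀ x : ↥(SL m), x.val ∈ Sset m := fun x => x.2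
  -- the step lemma
  have hstep : ∀ (x' y : ↥(SL m)), ¬x' ≤ y → ¬y ≤ x' → sφ x' ≤ sφ (x' ⊓ y) + 4 := by
    intro x' y hxy hyx
    have hφxy : ¬φ x' ≤ φ y := fun h => hxy (meet_reflect hinj hmeet h)
    have hφyx : ¬φ y ≤ φ x' := fun h => hyx (meet_reflect hinj hmeet h)
    rw [SL_le_iff] at hφxy hφyx
    have hc := incomp_close (himg x') (himg y) hφxy hφyx
    have hv : (φ (x' ⊓ y)).val = (min (φ x').val.1 (φ y).val.1, min (φ x').val.2 (φ y).val.2) := by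
      rw [hmeet]; exact SLval_inf _ _
    simp only [hsφ, hv]
    omega
  -- helper for applying the step lemma to explicit pairs
  have W : ∀ (xi xk x'i x'k yi yk : ℕ) (hx : (xi, xk) ∈ SL m) (hx' : (x'i, x'k) ∈ SL m)
      (hy : (yi, yk) ∈ SL m), min x'i yi = xi → min x'k yk = xk →
      ¬(x'i ≤ yi ∧ x'k ≤ yk) → ¬(yi ≤ x'i ∧ yk ≤ x'k) →
      sφ ⟨(x'i, x'k), hx'⟩ ≤ sφ ⟨(xi, xk), hx⟩ + 4 := by
    intro xi xk x'i x'k yi yk hx hx' hy hmin1 hmin2 hinc1 hinc2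
    have e1 : (⟨(x'i, x'k), hx'⟩ : ↥(SL m)) ⊓ ⟨(yi, yk), hy⟩ = ⟨(xi, xk), hx⟩ := by
      apply Subtype.ext
      rw [SLval_inf]
      simp [hmin1, hmin2]
    have := hstep ⟨(x'i, x'k), hx'⟩ ⟨(yi, yk), hy⟩
      (by rw [SL_le_iff]; exact hinc1) (by rw [SL_le_iff]; exact hinc2)
    rwa [e1] at this
  -- the image of the bottom element is the bottom element
  have hbotmem : ((1, 1) : ℕ × ℕ) ∈ SL m := by rw [mem_SL_iff]; omega
  have hbot : (φ ⟨(1, 1), hbotmem⟩).val = (1, 1) := by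
    obtain ⟨p1, hp1⟩ := h1
    have hle : (⟨(1, 1), hbotmem⟩ : ↥(SL m)) ≤ p1 := by
      rw [SL_le_iff]
      have := hself p1
      rw [Sset, Set.mem_setOf_eq] at this
      exact ⟨this.1, this.2.2.1⟩
    have h := meet_mono hmeet hle
    rw [SL_le_iff, hp1] at h
    have hmem := himg ⟨(1, 1), hbotmem⟩
    rw [Sset, Set.mem_setOf_eq] at hmem
    have : (φ ⟨(1, 1), hbotmem⟩).val.1 = 1 ∧ (φ ⟨(1, 1), hbotmem⟩).val.2 = 1 := by omega
    exact Prod.ext this.1 this.2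
  -- diagonal induction
  have hdiag : ∀ j : ℕ, 1 ≤ j → j + 1 ≤ m → ∀ h : ((j, j) : ℕ × ℕ) ∈ SL m,
      sφ ⟨(j, j), h⟩ ≤ 8 * j - 6 := by
    intro j
    induction j with
    | zero => omega
    | succ j ih =>
      intro _ hj1 h
      by_cases hj0 : j = 0
      · subst hj0
        have e : (⟨(0 + 1, 0 + 1), h⟩ : ↥(SL m)) = ⟨(1, 1), hbotmem⟩ := rfl
        rw [e]
        have : sφ ⟨(1, 1), hbotmem⟩ = 2 := by simp only [hsφ, hbot]
        omega
      · have hj : 1 ≤ j := by omega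
        have hjm : j + 1 ≤ m := by omega
        have hjm2 : j + 2 ≤ m := by omega
        have hd : ((j, j) : ℕ × ℕ) ∈ SL m := by rw [mem_SL_iff]; omega
        have hm1 : ((j, j + 1) : ℕ × ℕ) ∈ SL m := by rw [mem_SL_iff]; omega
        have hw1 : ((j + 1, j) : ℕ × ℕ) ∈ SL m := by rw [mem_SL_iff]; omega
        have hw2 : ((j, j + 2) : ℕ × ℕ) ∈ SL m := by rw [mem_SL_iff]; omega
        have s1 : sφ ⟨(j, j + 1), hm1⟩ ≤ sφ ⟨(j, j), hd⟩ + 4 :=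
          W j j j (j + 1) (j + 1) j hd hm1 hw1 (by omega) (by omega) (by omega) (by omega)
        have s2 : sφ ⟨(j + 1, j + 1), h⟩ ≤ sφ ⟨(j, j + 1), hm1⟩ + 4 :=
          W j (j + 1) (j + 1) (j + 1) j (j + 2) hm1 h hw2 (by omega) (by omega)
            (by omega) (by omega)
        have := ih hj hjm hd
        omega
  -- endgame
  obtain ⟨rr, hr⟩ := h2
  obtain ⟨ss, hs⟩ := h3
  have hrs1 : ¬rr ≤ ss := by
    intro h
    have := meet_mono hmeet h
    rw [SL_le_iff, hr, hs] at this
    omega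
  have hrs2 : ¬ss ≤ rr := by
    intro h
    have := meet_mono hmeet h
    rw [SL_le_iff, hr, hs] at this
    omega
  have hq : (φ (rr ⊓ ss)).val = (N - 1, N - 1) := by
    rw [hmeet, SLval_inf, hr, hs]
    have : min (N - 1) N = N - 1 ∧ min N (N - 1) = N - 1 := by omega
    rw [this.1, this.2]
  -- q = rr ⊓ ss, with value (a, b)
  set q : ↥(SL m) := rr ⊓ ss with hqdef
  obtain ⟨⟨a, b⟩, hab⟩ : ∃ ab : ℕ × ℕ, q.val = ab := ⟨q.val, rfl⟩
  have habm : ((a, b) : ℕ × ℕ) ∈ SL m := hab ▸ q.2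
  have habm' := habm
  rw [mem_SL_iff] at habm'
  -- q is not the top element (m, m)
  have hqne : ¬(a = m ∧ b = m) := by
    rintro ⟨rfl, rfl⟩
    apply hrs1
    have h1' : q ≤ rr := inf_le_left
    have h2' : rr ≤ q := by
      rw [SL_le_iff, hab]
      have := hself rr
      rw [Sset, Set.mem_setOf_eq] at this
      exact ⟨this.2.1, this.2.2.2.1⟩
    have : rr = q := le_antisymm h2' h1'
    rw [this]
    exact inf_le_right
  -- sφ q as an equation
  have hsq : sφ q = (N - 1) + (N - 1) := by simp only [hsφ, hq]
  -- bound sφ q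
  have hc1 : 1 ≤ min a b := by omega
  have hcm : min a b + 1 ≤ m := by omega
  have hdm : ((min a b, min a b) : ℕ × ℕ) ∈ SL m := by rw [mem_SL_iff]; omega
  have hdbound := hdiag (min a b) hc1 hcm hdm
  have sφeq : ∀ (x y : ↥(SL m)), x.val = y.val → sφ x = sφ y := fun x y h => by
    rw [Subtype.ext h]
  have hqbound : sφ q ≤ sφ ⟨(min a b, min a b), hdm⟩ + 8 := by
    have hqv : q = ⟨(a, b), habm⟩ := Subtype.ext hab
    rw [hqv]
    rcases Nat.lt_trichotomy a b with hab1 | hab1 | hab1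
    · -- a < b, so b = a+1 or b = a+2, min = a
      have hma : min a b = a := by omega
      have hda : ((a, a) : ℕ × ℕ) ∈ SL m := by rw [mem_SL_iff]; omega
      have hde : sφ ⟨(min a b, min a b), hdm⟩ = sφ ⟨(a, a), hda⟩ :=
        sφeq _ _ (by apply Prod.ext <;> simp <;> omega)
      rcases (by omega : b = a + 1 ∨ b = a + 2) with hb | hb
      · subst hb
        have hw : ((a + 1, a) : ℕ × ℕ) ∈ SL m := by rw [mem_SL_iff]; omega
        have := W a a a (a + 1) (a + 1) a hda habm hw
          (by omega) (by omega) (by omega) (by omega)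
        omega
      · subst hb
        have hm1 : ((a, a + 1) : ℕ × ℕ) ∈ SL m := by rw [mem_SL_iff]; omega
        have hw1 : ((a + 1, a) : ℕ × ℕ) ∈ SL m := by rw [mem_SL_iff]; omega
        have hw2 : ((a + 1, a + 1) : ℕ × ℕ) ∈ SL m := by rw [mem_SL_iff]; omega
        have t1 : sφ ⟨(a, a + 1), hm1⟩ ≤ sφ ⟨(a, a), hda⟩ + 4 :=
          W a a a (a + 1) (a + 1) a hda hm1 hw1
            (by omega) (by omega) (by omega) (by omega)
        have t2 : sφ ⟨(a, a + 2), habm⟩ ≤ sφ ⟨(a, a + 1), hm1⟩ + 4 :=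
          W a (a + 1) a (a + 2) (a + 1) (a + 1) hm1 habm hw2
            (by omega) (by omega) (by omega) (by omega)
        omega
    · -- a = b
      have hde : sφ ⟨(min a b, min a b), hdm⟩ = sφ ⟨(a, b), habm⟩ :=
        sφeq _ _ (by apply Prod.ext <;> simp <;> omega)
      omega
    · -- b < a, so a = b + 1, min = b
      have hma : min a b = b := by omega
      have ha1 : a = b + 1 := by omega
      subst ha1
      have hdb : ((b, b) : ℕ × ℕ) ∈ SL m := by rw [mem_SL_iff]; omega
      have hde : sφ ⟨(min (b + 1) b, min (b + 1) b), hdm⟩ = sφ ⟨(b, b), hdb⟩ :=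
        sφeq _ _ (by apply Prod.ext <;> simp <;> omega)
      have hw : ((b, b + 1) : ℕ × ℕ) ∈ SL m := by rw [mem_SL_iff]; omega
      have := W b b (b + 1) b b (b + 1) hdb habm hw
        (by omega) (by omega) (by omega) (by omega)
      omega
  omega

end AuxComb
section AuxNoHom

lemma sum_SL0 {p : ℕ × ℕ} (h : p ∈ SL0) :
    2 ≤ p.1 + p.2 ∧ p.1 + p.2 ≤ 8 ∧ p.1 + p.2 ≠ 5 := by
  rw [mem_SL0_iff] at h
  rcases h with rfl | rfl | rfl | rfl | rfl | rfl | rfl | rfl <;> omega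

lemma strict_sum {a b : ℕ × ℕ} (hle : a.1 ≤ b.1 ∧ a.2 ≤ b.2) (hne : a ≠ b) :
    a.1 + a.2 + 1 ≤ b.1 + b.2 := by
  obtain ⟨a1, a2⟩ := a; obtain ⟨b1, b2⟩ := b
  have hne' : ¬(a1 = b1 ∧ a2 = b2) := fun h => hne (by rw [Prod.mk.injEq]; exact h)
  have h1 : a1 ≤ b1 := hle.1
  have h2 : a2 ≤ b2 := hle.2
  show a1 + a2 + 1 ≤ b1 + b2
  omega

/-- There are no morphisms `E(n) ⟶ E_0`. -/
lemma no_hom_to_e0 {n : ℕ} {h4 : 4 ≤ n} (g : EObj.en n h4 ⟶ EObj.e0) : False := by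
  obtain ⟨φ, hinj, hmeet, -⟩ := extract g
  -- φ : ↥(SL n) → ↥SL0
  have hstep : ∀ (x y : ↥(SL n)), x ≤ y → x.val ≠ y.val →
      (φ x).val.1 + (φ x).val.2 + 1 ≤ (φ y).val.1 + (φ y).val.2 := by
    intro x y hle hne
    have h1 : φ x ≤ φ y := meet_mono hmeet hle
    have h2 : φ x ≠ φ y := fun h => hne (congrArg Subtype.val (hinj h))
    replace h1 := (SL_le_iff (L := SL0) (φ x) (φ y)).1 h1
    exact strict_sum h1 fun h => h2 (Subtype.ext h)
  have m0 : ((1, 1) : ℕ × ℕ) ∈ SL n := by rw [mem_SL_iff]; omega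
  have m1 : ((1, 2) : ℕ × ℕ) ∈ SL n := by rw [mem_SL_iff]; omega
  have m2 : ((2, 2) : ℕ × ℕ) ∈ SL n := by rw [mem_SL_iff]; omega
  have m3 : ((2, 3) : ℕ × ℕ) ∈ SL n := by rw [mem_SL_iff]; omega
  have m4 : ((3, 3) : ℕ × ℕ) ∈ SL n := by rw [mem_SL_iff]; omega
  have m5 : ((3, 4) : ℕ × ℕ) ∈ SL n := by rw [mem_SL_iff]; omega
  have m6 : ((4, 4) : ℕ × ℕ) ∈ SL n := by rw [mem_SL_iff]; omega
  have s0 := hstep ⟨(1, 1), m0⟩ ⟨(1, 2), m1⟩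
    (by rw [Subtype.mk_le_mk]; exact Prod.mk_le_mk.2 (by omega))
    (by intro h; have h' : ((1, 1) : ℕ × ℕ) = (1, 2) := h; injection h' with e1 e2; omega)
  have s1 := hstep ⟨(1, 2), m1⟩ ⟨(2, 2), m2⟩
    (by rw [Subtype.mk_le_mk]; exact Prod.mk_le_mk.2 (by omega))
    (by intro h; have h' : ((1, 2) : ℕ × ℕ) = (2, 2) := h; injection h' with e1 e2; omega)
  have s2 := hstep ⟨(2, 2), m2⟩ ⟨(2, 3), m3⟩
    (by rw [Subtype.mk_le_mk]; exact Prod.mk_le_mk.2 (by omega))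
    (by intro h; have h' : ((2, 2) : ℕ × ℕ) = (2, 3) := h; injection h' with e1 e2; omega)
  have s3 := hstep ⟨(2, 3), m3⟩ ⟨(3, 3), m4⟩
    (by rw [Subtype.mk_le_mk]; exact Prod.mk_le_mk.2 (by omega))
    (by intro h; have h' : ((2, 3) : ℕ × ℕ) = (3, 3) := h; injection h' with e1 e2; omega)
  have s4 := hstep ⟨(3, 3), m4⟩ ⟨(3, 4), m5⟩
    (by rw [Subtype.mk_le_mk]; exact Prod.mk_le_mk.2 (by omega))
    (by intro h; have h' : ((3, 3) : ℕ × ℕ) = (3, 4) := h; injection h' with e1 e2; omega)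
  have s5 := hstep ⟨(3, 4), m5⟩ ⟨(4, 4), m6⟩
    (by rw [Subtype.mk_le_mk]; exact Prod.mk_le_mk.2 (by omega))
    (by intro h; have h' : ((3, 4) : ℕ × ℕ) = (4, 4) := h; injection h' with e1 e2; omega)
  have t0 := sum_SL0 (φ ⟨(1, 1), m0⟩).2
  have t3 := sum_SL0 (φ ⟨(2, 3), m3⟩).2
  have t6 := sum_SL0 (φ ⟨(4, 4), m6⟩).2
  omega

end AuxNoHom
section AuxV

lemma mem_SL0_arith {p : ℕ × ℕ} (h : p ∈ SL0) :
    1 ≤ p.1 ∧ p.1 ≤ 4 ∧ 1 ≤ p.2 ∧ p.2 ≤ 4 ∧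
      ((p.1 ≤ 2 ∧ p.2 ≤ 2) ∨ (3 ≤ p.1 ∧ 3 ≤ p.2)) := by
  rw [mem_SL0_iff] at h
  obtain ⟨p1, p2⟩ := p
  rcases h with h | h | h | h | h | h | h | h <;>
    (injection h with e1 e2; subst e1; subst e2; omega)

/-- The underlying map of the corner embedding. -/
def vfun (N : ℕ) : ℕ × ℕ → ℕ × ℕ := fun p =>
  if p.1 ≤ 2 then p else (p.1 + (N - 4), p.2 + (N - 4))

lemma vfun_low {N : ℕ} {p : ℕ × ℕ} (h : p.1 ≤ 2) : vfun N p = p := if_pos h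

lemma vfun_high {N : ℕ} {p : ℕ × ℕ} (h : 2 < p.1) :
    vfun N p = (p.1 + (N - 4), p.2 + (N - 4)) := if_neg (by omega)

lemma vfun_mem {N : ℕ} (hN : 4 ≤ N) {p : ℕ × ℕ} (hp : p ∈ SL0) : vfun N p ∈ SL N := by
  have h := mem_SL0_arith hp
  rw [mem_SL_iff]
  unfold vfun
  split_ifs with hc <;> omega

lemma vfun_meet {N : ℕ} (hN : 4 ≤ N) {p q : ℕ × ℕ} (hp : p ∈ SL0) (hq : q ∈ SL0) :
    vfun N (p ⊓ q) = vfun N p ⊓ vfun N q := by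
  have h1 := mem_SL0_arith hp
  have h2 := mem_SL0_arith hq
  rw [Prod.inf_def]
  unfold vfun
  rw [Prod.inf_def, Prod.ext_iff]
  split_ifs <;> constructor <;> omega

lemma vfun_inj {N : ℕ} (hN : 4 ≤ N) {p q : ℕ × ℕ} (hp : p ∈ SL0) (hq : q ∈ SL0)
    (h : vfun N p = vfun N q) : p = q := by
  have h1 := mem_SL0_arith hp
  have h2 := mem_SL0_arith hq
  unfold vfun at h
  rw [Prod.ext_iff] at h ⊢
  split_ifs at h <;> omega

/-- The corner embedding `SL0 → SL N`. -/
def vθ (N : ℕ) (hN : 4 ≤ N) : ↥SL0 → ↥(SL N) := fun p => ⟨vfun N p.val, vfun_mem hN p.2⟩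

lemma vθ_meet (N : ℕ) (hN : 4 ≤ N) :
    ∀ p q : ↥SL0, vθ N hN (p ⊓ q) = vθ N hN p ⊓ vθ N hN q := fun p q =>
  Subtype.ext (vfun_meet hN p.2 q.2)

lemma vθ_inj (N : ℕ) (hN : 4 ≤ N) : Function.Injective (vθ N hN) := fun p q h =>
  Subtype.ext (vfun_inj hN p.2 q.2 (congrArg Subtype.val h))

/-- First chain for the retraction `SL N → SL0`. -/
def achain (N : ℕ) (i : ℕ) : ↥SL0 :=
  if i ≤ 1 then ⟨(1, 2), by rw [mem_SL0_iff]; tauto⟩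
  else if i ≤ N - 2 then ⟨(2, 2), by rw [mem_SL0_iff]; tauto⟩
  else if i ≤ N - 1 then ⟨(3, 4), by rw [mem_SL0_iff]; tauto⟩
  else ⟨(4, 4), by rw [mem_SL0_iff]; tauto⟩

/-- Second chain for the retraction `SL N → SL0`. -/
def bchain (N : ℕ) (k : ℕ) : ↥SL0 :=
  if k ≤ 1 then ⟨(2, 1), by rw [mem_SL0_iff]; tauto⟩
  else if k ≤ N - 2 then ⟨(2, 2), by rw [mem_SL0_iff]; tauto⟩
  else if k ≤ N - 1 then ⟨(4, 3), by rw [mem_SL0_iff]; tauto⟩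
  else ⟨(4, 4), by rw [mem_SL0_iff]; tauto⟩

lemma achain_val (N i : ℕ) : (achain N i).val =
    if i ≤ 1 then (1, 2) else if i ≤ N - 2 then (2, 2) else if i ≤ N - 1 then (3, 4)
    else (4, 4) := by
  unfold achain; split_ifs <;> rfl

lemma bchain_val (N k : ℕ) : (bchain N k).val =
    if k ≤ 1 then (2, 1) else if k ≤ N - 2 then (2, 2) else if k ≤ N - 1 then (4, 3)
    else (4, 4) := by
  unfold bchain; split_ifs <;> rfl

lemma achain_mono (N : ℕ) : Monotone (achain N) := by
  intro i j hij
  unfold achain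
  split_ifs <;> simp only [Subtype.mk_le_mk, Prod.mk_le_mk] <;> omega

lemma bchain_mono (N : ℕ) : Monotone (bchain N) := by
  intro i j hij
  unfold bchain
  split_ifs <;> simp only [Subtype.mk_le_mk, Prod.mk_le_mk] <;> omega

lemma chain_min {c : ℕ → ↥SL0} (hc : Monotone c) (i j : ℕ) :
    c (min i j) = c i ⊓ c j := by
  rcases le_total i j with h | h
  · rw [min_eq_left h]; exact (inf_eq_left.2 (hc h)).symm
  · rw [min_eq_right h]; exact (inf_eq_right.2 (hc h)).symm

/-- The retraction `SL N → SL0`. -/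
def vψ (N : ℕ) : ↥(SL N) → ↥SL0 := fun q => achain N q.val.1 ⊓ bchain N q.val.2

lemma vψ_meet (N : ℕ) : ∀ x y : ↥(SL N), vψ N (x ⊓ y) = vψ N x ⊓ vψ N y := by
  intro x y
  unfold vψ
  have hv : (x ⊓ y).val = (min x.val.1 y.val.1, min x.val.2 y.val.2) := SLval_inf x y
  rw [hv]
  show achain N (min x.val.1 y.val.1) ⊓ bchain N (min x.val.2 y.val.2) = _
  rw [chain_min (achain_mono N), chain_min (bchain_mono N)]
  exact inf_inf_inf_comm _ _ _ _

lemma vψ_retract (N : ℕ) (hN : 4 ≤ N) : ∀ p : ↥SL0, vψ N (vθ N hN p) = p := by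
  rintro ⟨pv, hp⟩
  have h := mem_SL0_arith hp
  apply Subtype.ext
  show (achain N (vfun N pv).1).val ⊓ (bchain N (vfun N pv).2).val = pv
  rw [achain_val, bchain_val]
  unfold vfun
  rw [Prod.inf_def, Prod.ext_iff]
  constructor <;> split_ifs <;> omega

end AuxV
section AuxMain

/-- The corner morphism `E_0 ⟶ E(N)`. -/
noncomputable def vmor (N : ℕ) (hN : 4 ≤ N) : EObj.e0 ⟶ EObj.en N hN :=
  mkHom EObj.e0 (EObj.en N hN) (vθ N hN) (vψ N) (vθ_meet N hN) (vθ_inj N hN)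
    (vψ_meet N) (vψ_retract N hN)

lemma vmor_apply (N : ℕ) (hN : 4 ≤ N) (ε : Bool) (p : ↥SL0) :
    (vmor N hN).1 (some (ε, p)) = some (ε, vθ N hN p) := rfl

/-- Size of an object. -/
def szE : EObj → ℕ
  | .e0 => 4
  | .en n _ => n

lemma factor_aux {N B : ℕ} {hN : 4 ≤ N} (W : EObj) (hW : szE W ≤ B)
    {n' : ℕ} {h4 : 4 ≤ n'} (u : EObj.e0 ⟶ EObj.en n' h4) (g : EObj.en n' h4 ⟶ W)
    (h : W ⟶ EObj.en N hN) :
    ∃ (n'' : ℕ) (h4'' : 4 ≤ n''), n'' ≤ B ∧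
      ∃ (u' : EObj.e0 ⟶ EObj.en n'' h4'') (g' : EObj.en n'' h4'' ⟶ EObj.en N hN),
        (u ≫ g) ≫ h = u' ≫ g' := by
  cases W with
  | e0 => exact (no_hom_to_e0 g).elim
  | en nj hj =>
    exact ⟨nj, hj, by simpa [szE] using hW, u ≫ g, h, by rw [CategoryTheory.Category.assoc]⟩

/-- Core statement: the subfunctor is not finitely generated. -/
lemma part1 (k : Type) [Ring k] [Nontrivial k] :
    ¬∃ (ℓ : ℕ) (Z : Fin ℓ → EObj) (α : ∀ j, (EObj.e0 ⟶ Z j) →₀ k),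
      (∀ j, α j ∈ Submodule.span k (MsetE k (Z j))) ∧
      ∀ W : EObj, Submodule.span k (MsetE k W) =
        Submodule.span k
          {v | ∃ (j : Fin ℓ) (h : Z j ⟶ W), v = Finsupp.mapDomain (· ≫ h) (α j)} := by
  rintro ⟨ℓ, Z, α, hα, hsp⟩
  classical
  set B : ℕ := Finset.univ.sup (fun j => szE (Z j)) with hBdef
  have hN : 4 ≤ 4 * B + 8 := by omega
  set N : ℕ := 4 * B + 8 with hNdef
  set v : EObj.e0 ⟶ EObj.en N hN := vmor N hN with hvdef
  -- the single at v lies in the span of the generating set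
  have hv : Finsupp.single v (1 : k) ∈ Submodule.span k (MsetE k (EObj.en N hN)) := by
    apply Submodule.subset_span
    exact ⟨N, hN, v, 𝟙 _, by rw [CategoryTheory.Category.comp_id]⟩
  rw [hsp] at hv
  -- the target set of morphisms
  set T : Set (EObj.e0 ⟶ EObj.en N hN) :=
    {f | ∃ (n'' : ℕ) (h4'' : 4 ≤ n''), n'' ≤ B ∧
      ∃ (u' : EObj.e0 ⟶ EObj.en n'' h4'') (g' : EObj.en n'' h4'' ⟶ EObj.en N hN),
        f = u' ≫ g'} with hTdef
  -- all generators are supported on T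
  have hTsub : {v' | ∃ (j : Fin ℓ) (h : Z j ⟶ EObj.en N hN),
      v' = Finsupp.mapDomain (· ≫ h) (α j)} ⊆ ↑(Finsupp.supported k k T) := by
    rintro _ ⟨j, h, rfl⟩
    rw [SetLike.mem_coe, Finsupp.mem_supported]
    intro f hf
    rw [Finset.mem_coe] at hf
    have hf2 := Finsupp.mapDomain_support hf
    rw [Finset.mem_image] at hf2
    obtain ⟨f₀, hf₀, rfl⟩ := hf2
    -- the support of α j consists of composites through some E(n')
    have hj : α j ∈ Finsupp.supported k k
        {f' | ∃ (n' : ℕ) (h4 : 4 ≤ n') (u : EObj.e0 ⟶ EObj.en n' h4)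
          (g : EObj.en n' h4 ⟶ Z j), f' = u ≫ g} := by
      refine Submodule.span_le.2 ?_ (hα j)
      rintro _ ⟨n', h4, u, g, rfl⟩
      rw [SetLike.mem_coe, Finsupp.mem_supported]
      refine Finset.coe_subset.2 Finsupp.support_single_subset |>.trans ?_
      simp only [Finset.coe_singleton, Set.singleton_subset_iff]
      exact ⟨n', h4, u, g, rfl⟩
    rw [Finsupp.mem_supported] at hj
    obtain ⟨n', h4, u, g, rfl⟩ := hj hf₀
    have hWB : szE (Z j) ≤ B := by
      rw [hBdef]
      exact Finset.le_sup (f := fun j => szE (Z j)) (Finset.mem_univ j)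
    obtain ⟨n'', h4'', hn''B, u', g', he⟩ := factor_aux (Z j) hWB u g h
    exact ⟨n'', h4'', hn''B, u', g', he⟩
  -- hence v ∈ T
  have hvT : Finsupp.single v (1 : k) ∈ Finsupp.supported k k T :=
    Submodule.span_le.2 hTsub hv
  have hvT2 : v ∈ T := by
    rw [Finsupp.mem_supported] at hvT
    apply hvT
    rw [Finsupp.support_single_ne_zero v one_ne_zero]
    simp
  obtain ⟨m, h4m, hmB, u, g, hveq⟩ := hvT2
  -- extract the meet-embedding underlying g
  obtain ⟨φ, hinj, hmeet, hrange⟩ := extract g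
  -- range facts
  have hcomp : ∀ p : ↥SL0, g.1 (u.1 (some (true, p))) = some (true, vθ N hN p) := by
    intro p
    have h1 : v.1 (some (true, p)) = some (true, vθ N hN p) := vmor_apply N hN true p
    rw [hveq] at h1
    exact h1
  have hmem11 : ((1, 1) : ℕ × ℕ) ∈ SL0 := by rw [mem_SL0_iff]; tauto
  have hmem34 : ((3, 4) : ℕ × ℕ) ∈ SL0 := by rw [mem_SL0_iff]; tauto
  have hmem43 : ((4, 3) : ℕ × ℕ) ∈ SL0 := by rw [mem_SL0_iff]; tauto
  have hval11 : (vθ N hN ⟨(1, 1), hmem11⟩).val = (1, 1) := by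
    show vfun N (1, 1) = (1, 1)
    rw [vfun_low (by norm_num)]
  have hval34 : (vθ N hN ⟨(3, 4), hmem34⟩).val = (N - 1, N) := by
    show vfun N (3, 4) = (N - 1, N)
    rw [vfun_high (by norm_num)]
    rw [Prod.mk.injEq]
    omega
  have hval43 : (vθ N hN ⟨(4, 3), hmem43⟩).val = (N, N - 1) := by
    show vfun N (4, 3) = (N, N - 1)
    rw [vfun_high (by norm_num)]
    rw [Prod.mk.injEq]
    omega
  have hr1 : ∃ p, (φ p).val = ((1, 1) : ℕ × ℕ) := by
    obtain ⟨p, hp⟩ := hrange _ true (vθ N hN ⟨(1, 1), hmem11⟩) (hcomp ⟨(1, 1), hmem11⟩)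
    exact ⟨p, by rw [hp, hval11]⟩
  have hr2 : ∃ p, (φ p).val = ((N - 1, N) : ℕ × ℕ) := by
    obtain ⟨p, hp⟩ := hrange _ true (vθ N hN ⟨(3, 4), hmem34⟩) (hcomp ⟨(3, 4), hmem34⟩)
    exact ⟨p, by rw [hp, hval34]⟩
  have hr3 : ∃ p, (φ p).val = ((N, N - 1) : ℕ × ℕ) := by
    obtain ⟨p, hp⟩ := hrange _ true (vθ N hN ⟨(4, 3), hmem43⟩) (hcomp ⟨(4, 3), hmem43⟩)
    exact ⟨p, by rw [hp, hval43]⟩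
  have hkey := keybound h4m (by omega) φ hinj hmeet hr1 hr2 hr3
  omega

end AuxMain
section AuxFunctor

/-- The principal projective `P_{E_0}` as a functor. -/
noncomputable def PP (k : Type) [Ring k] : EObj ⥤ ModuleCat.{0} k where
  obj Z := ModuleCat.of k ((EObj.e0 ⟶ Z) →₀ k)
  map {Z W} h := ModuleCat.ofHom (Finsupp.lmapDomain k k (· ≫ h))
  map_id Z := by
    refine ModuleCat.hom_ext (LinearMap.ext fun x => ?_)
    show Finsupp.lmapDomain k k (· ≫ 𝟙 Z) x = x
    rw [Finsupp.lmapDomain_apply]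
    rw [show (· ≫ 𝟙 Z : (EObj.e0 ⟶ Z) → (EObj.e0 ⟶ Z)) = id from
      funext fun f => CategoryTheory.Category.comp_id f]
    exact Finsupp.mapDomain_id
  map_comp {Z W V} f g := by
    refine ModuleCat.hom_ext (LinearMap.ext fun x => ?_)
    show Finsupp.lmapDomain k k (· ≫ (f ≫ g)) x =
      Finsupp.lmapDomain k k (· ≫ g) (Finsupp.lmapDomain k k (· ≫ f) x)
    rw [Finsupp.lmapDomain_apply, Finsupp.lmapDomain_apply, Finsupp.lmapDomain_apply]
    rw [show (· ≫ (f ≫ g) : (EObj.e0 ⟶ Z) → (EObj.e0 ⟶ V)) =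
      (· ≫ g) ∘ (· ≫ f) from funext fun h => (CategoryTheory.Category.assoc h f g).symm]
    exact Finsupp.mapDomain_comp

lemma PP_map_apply (k : Type) [Ring k] {Z W : EObj} (h : Z ⟶ W) (x : (EObj.e0 ⟶ Z) →₀ k) :
    (PP k).map h x = Finsupp.mapDomain (· ≫ h) x :=
  Finsupp.lmapDomain_apply _ _ _ _

lemma PP_fg (k : Type) [Ring k] : FunctorFG (PP k) := by
  classical
  refine ⟨1, fun _ => EObj.e0, fun _ => Finsupp.single (𝟙 EObj.e0) 1, fun W => ?_⟩
  have hset : {v : (EObj.e0 ⟶ W) →₀ k | ∃ (j : Fin 1) (h : EObj.e0 ⟶ W),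
      v = (PP k).map h (Finsupp.single (𝟙 EObj.e0) 1)} =
      (fun f : EObj.e0 ⟶ W => Finsupp.single f (1 : k)) '' Set.univ := by
    ext w
    constructor
    · rintro ⟨j, h, rfl⟩
      refine ⟨h, trivial, ?_⟩
      rw [PP_map_apply, Finsupp.mapDomain_single, CategoryTheory.Category.id_comp]
    · rintro ⟨h, -, rfl⟩
      refine ⟨0, h, ?_⟩
      rw [PP_map_apply, Finsupp.mapDomain_single, CategoryTheory.Category.id_comp]
  show (⊤ : Submodule k ((EObj.e0 ⟶ W) →₀ k)) =
    Submodule.span k {v : (EObj.e0 ⟶ W) →₀ k | ∃ (_ : Fin 1) (h : EObj.e0 ⟶ W),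
      v = (PP k).map h (Finsupp.single (𝟙 EObj.e0) 1)}
  have hset' : {v : (EObj.e0 ⟶ W) →₀ k | ∃ (_ : Fin 1) (h : EObj.e0 ⟶ W),
      v = (PP k).map h (Finsupp.single (𝟙 EObj.e0) 1)} =
      (fun f : EObj.e0 ⟶ W => Finsupp.single f (1 : k)) '' Set.univ := hset
  rw [hset', ← Finsupp.supported_eq_span_single, Finsupp.supported_univ]

lemma M_subfunctor (k : Type) [Ring k] :
    IsSubfunctor (PP k) (fun Z => Submodule.span k (MsetE k Z)) := by
  intro Z W h x hx
  refine Submodule.span_induction ?_ ?_ ?_ ?_ hx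
  · rintro _ ⟨n, h4, u, g, rfl⟩
    apply Submodule.subset_span
    refine ⟨n, h4, u, g ≫ h, ?_⟩
    rw [PP_map_apply, Finsupp.mapDomain_single, CategoryTheory.Category.assoc]
  · rw [map_zero]; exact Submodule.zero_mem _
  · intro a b _ _ ha hb
    rw [map_add]; exact Submodule.add_mem _ ha hb
  · intro c a _ ha
    rw [map_smul]; exact Submodule.smul_mem _ c ha

end AuxFunctor
/-- The subfunctor `M` of the principal projective `P_{E_0} : C ⥤ ModuleCat k`
spanned by the `e_{g ∘ u}` (for `u : E_0 ⟶ E(n)`, `g : E(n) ⟶ Z`, `n ≥ 4`) is not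
finitely generated; in particular `C` is not locally Noetherian. -/
theorem stmt13 (k : Type) [Ring k] [Nontrivial k] :
    (¬∃ (ℓ : ℕ) (Z : Fin ℓ → EObj) (α : ∀ j, (EObj.e0 ⟶ Z j) →₀ k),
      (∀ j, α j ∈ Submodule.span k (MsetE k (Z j))) ∧
      ∀ W : EObj, Submodule.span k (MsetE k W) =
        Submodule.span k
          {v | ∃ (j : Fin ℓ) (h : Z j ⟶ W), v = Finsupp.mapDomain (· ≫ h) (α j)}) ∧
    ¬LocallyNoetherian EObj := by
  constructor
  · exact part1 k
  · intro hLN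
    have hsf := hLN ℤ (PP ℤ) (PP_fg ℤ) (fun Z => Submodule.span ℤ (MsetE ℤ Z))
      (M_subfunctor ℤ)
    obtain ⟨ℓ, Z, α, h1, h2⟩ := hsf
    refine part1 ℤ ⟨ℓ, Z, (fun j => α j), h1, fun W => ?_⟩
    have hseteq : {v : (EObj.e0 ⟶ W) →₀ ℤ | ∃ (j : Fin ℓ) (h : Z j ⟶ W),
        v = Finsupp.mapDomain (· ≫ h) (α j)} =
        {v | ∃ (j : Fin ℓ) (h : Z j ⟶ W), v = (PP ℤ).map h (α j)} := by
      ext w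
      simp only [Set.mem_setOf_eq, PP_map_apply]
      rfl
    rw [hseteq]
    exact h2 W
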